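/- Let T be a bounded contraction on ℓ²(I), let e ∈ I, and suppose the vector δ_e is cyclic for the commutant of the unital C*-algebra A generated by T*T. Then ‖T‖² = lim_{n→∞} ((T*T)ⁿ δ_e, δ_e)^{1/n}. -/

import Mathlib

open Filter ContinuousLinearMap

open StarAlgebra in
lemma cfc_complex_mem_elemental {A : Type*} [CStarAlgebra A] (a : A) [ha : IsStarNormal a]
    (f : ℂ → ℂ) : cfc f a ∈ StarAlgebra.elemental ℂ a := by
  by_cases hf : ContinuousOn f (spectrum ℂ a)
  · rw [cfc_apply f a ha hf, cfcHom_eq_of_isStarNormal]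
    exact SetLike.coe_mem _
  · rw [cfc_apply_of_not_continuousOn a hf]; exact zero_mem _

lemma Commute.cfc_real' {A : Type*} [CStarAlgebra A] {a b : A} (ha : IsSelfAdjoint a)
    (hb : Commute b a) (f : ℝ → ℝ) : Commute b (cfc f a) := by
  have ha' : IsStarNormal a := ha.isStarNormal
  rw [cfc_real_eq_complex f ha]
  let C : StarSubalgebra ℂ A :=
    { carrier := {x | Commute b x ∧ Commute (star b) x}
      mul_mem' := fun hx hy => ⟨hx.1.mul_right hy.1, hx.2.mul_right hy.2⟩
      add_mem' := fun hx hy => ⟨hx.1.add_right hy.1, hx.2.add_right hy.2⟩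
      algebraMap_mem' := fun r => ⟨(Algebra.commutes r b).symm, (Algebra.commutes r (star b)).symm⟩
      star_mem' := fun {x} hx => ⟨by simpa using hx.2.star_star, by simpa using hx.1.star_star⟩ }
  have hC : IsClosed (C : Set A) :=
    ((isClosed_eq (continuous_mul_left b) (continuous_mul_right b)).inter
      (isClosed_eq (continuous_mul_left (star b)) (continuous_mul_right (star b))))
  have hmem : a ∈ C := ⟨hb, ha.star_eq ▸ hb.star_star⟩
  exact ((StarAlgebra.elemental.le_of_mem hC hmem) (cfc_complex_mem_elemental a _)).1

set_option maxHeartbeats 2000000 in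
/-- For a contraction `T` on `ℓ²(I)` such that `δ_e` is cyclic for the commutant of the
C*-algebra generated by `T*T`, the norm of `T` squared is the limit of the `n`-th roots of
the moments `((T*T)^n δ_e, δ_e)`. -/
theorem stmt_2 {I : Type*} [Countable I] [DecidableEq I]
    (T : lp (fun _ : I => ℂ) 2 →L[ℂ] lp (fun _ : I => ℂ) 2)
    (hcontr : ‖T‖ ≤ 1) (e : I)
    (hcyc : Dense {x : lp (fun _ : I => ℂ) 2 |
      ∃ S : lp (fun _ : I => ℂ) 2 →L[ℂ] lp (fun _ : I => ℂ) 2,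
        Commute S (adjoint T * T) ∧ S (lp.single 2 e (1 : ℂ)) = x}) :
    Tendsto
      (fun n : ℕ =>
        ((inner ℂ (((adjoint T * T) ^ n) (lp.single 2 e (1 : ℂ))) (lp.single 2 e (1 : ℂ)) : ℂ).re)
          ^ ((n : ℝ)⁻¹))
      atTop (nhds (‖T‖ ^ 2)) := by
  set P : lp (fun _ : I => ℂ) 2 →L[ℂ] lp (fun _ : I => ℂ) 2 := adjoint T * T with hPdef
  set δ : lp (fun _ : I => ℂ) 2 := lp.single 2 e 1 with hδdef
  have hδ : ‖δ‖ = 1 := by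
    have := lp.norm_single (p := 2) (E := fun _ : I => ℂ) (by norm_num) e (1 : ℂ)
    simpa [hδdef] using this
  have hδne : δ ≠ 0 := by intro h; rw [h] at hδ; simp at hδ
  have : Nontrivial (lp (fun _ : I => ℂ) 2 →L[ℂ] lp (fun _ : I => ℂ) 2) := by
    refine ⟨1, 0, fun h => hδne ?_⟩
    simpa using ContinuousLinearMap.ext_iff.mp h δ
  have hPpos : (0 : lp (fun _ : I => ℂ) 2 →L[ℂ] lp (fun _ : I => ℂ) 2) ≤ P := by
    rw [hPdef, ← star_eq_adjoint]; exact star_mul_self_nonneg T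
  have hPsa : IsSelfAdjoint P := .of_nonneg hPpos
  have hPnorm : ‖P‖ = ‖T‖ ^ 2 := by
    rw [hPdef, sq]; exact norm_adjoint_comp_self T
  have hP1 : ‖P‖ ≤ 1 := by
    rw [hPnorm]; nlinarith [norm_nonneg T]
  -- the square root of P
  have hspec : ∀ x ∈ spectrum ℝ P, 0 ≤ x ∧ x ≤ 1 := by
    intro x hx
    refine ⟨spectrum_nonneg_of_nonneg hPpos hx, ?_⟩
    calc x ≤ |x| := le_abs_self x
      _ = ‖x‖ := rfl
      _ ≤ ‖P‖ := spectrum.norm_le_norm_of_mem hx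
      _ ≤ 1 := hP1
  letI : ContinuousFunctionalCalculus ℝ (lp (fun _ : I => ℂ) 2 →L[ℂ] lp (fun _ : I => ℂ) 2) IsSelfAdjoint :=
    IsSelfAdjoint.instContinuousFunctionalCalculus
  set Q : lp (fun _ : I => ℂ) 2 →L[ℂ] lp (fun _ : I => ℂ) 2 := cfc Real.sqrt P with hQdef
  have hQpos : (0 : lp (fun _ : I => ℂ) 2 →L[ℂ] lp (fun _ : I => ℂ) 2) ≤ Q :=
    cfc_nonneg (fun x _ => Real.sqrt_nonneg x)
  have hQsa : IsSelfAdjoint Q := .of_nonneg hQpos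
  have hQ2 : Q ^ 2 = P := by
    rw [hQdef, ← cfc_pow Real.sqrt 2 P]
    calc cfc (fun x => Real.sqrt x ^ 2) P = cfc (id : ℝ → ℝ) P := by
          apply cfc_congr
          intro x hx
          simpa using Real.sq_sqrt (hspec x hx).1
      _ = P := cfc_id ℝ P
  have hsym : ∀ (A : lp (fun _ : I => ℂ) 2 →L[ℂ] lp (fun _ : I => ℂ) 2), IsSelfAdjoint A →
      ∀ x y, (inner ℂ (A x) y : ℂ) = inner ℂ x (A y) := by
    intro A hA x y
    conv_lhs => rw [← hA.adjoint_eq]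
    exact ContinuousLinearMap.adjoint_inner_left A y x
  have hre : ∀ x : lp (fun _ : I => ℂ) 2, (inner ℂ x x : ℂ).re = ‖x‖ ^ 2 := fun x => by
    rw [← inner_self_eq_norm_sq (𝕜 := ℂ)]; rfl
  set c : ℕ → ℝ := fun n => ‖(Q ^ n) δ‖ with hcdef
  have hc0 : c 0 = 1 := by simpa [hcdef] using hδ
  have hcnn : ∀ n, 0 ≤ c n := fun n => norm_nonneg _
  have ha' : ∀ n, ((inner ℂ ((P ^ n) δ) δ : ℂ)).re = c n ^ 2 := by
    intro n
    rw [← hQ2, ← pow_mul, two_mul, pow_add, ContinuousLinearMap.mul_apply,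
      hsym _ (hQsa.pow n), hre]
  have hQcontr : ∀ z, ‖Q z‖ ≤ ‖z‖ := by
    intro z
    have h1 : ‖Q z‖ ^ 2 = (inner ℂ (Q z) (Q z) : ℂ).re := (hre _).symm
    have h2 : (inner ℂ (Q z) (Q z) : ℂ) = inner ℂ z (P z) := by
      rw [hsym _ hQsa, ← ContinuousLinearMap.mul_apply, ← sq, hQ2]
    have h3 : (inner ℂ z (P z) : ℂ).re ≤ ‖z‖ * ‖P z‖ := by
      calc (inner ℂ z (P z) : ℂ).re ≤ ‖(inner ℂ z (P z) : ℂ)‖ := Complex.re_le_norm _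
        _ = ‖(inner ℂ z (P z) : ℂ)‖ := rfl
        _ ≤ ‖z‖ * ‖P z‖ := norm_inner_le_norm _ _
    have h4 : ‖P z‖ ≤ ‖z‖ := by
      calc ‖P z‖ ≤ ‖P‖ * ‖z‖ := P.le_opNorm z
        _ ≤ ‖z‖ := by nlinarith [norm_nonneg z]
    have h5 : ‖Q z‖ ^ 2 ≤ ‖z‖ * ‖z‖ := by
      rw [h1, h2]
      exact h3.trans (by nlinarith [norm_nonneg z])
    nlinarith [h5, norm_nonneg (Q z), norm_nonneg z]
  have hcmono : ∀ n, c (n + 1) ≤ c n := by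
    intro n
    calc c (n + 1) = ‖Q ((Q ^ n) δ)‖ := by
          rw [hcdef]; simp only [pow_succ']; rw [ContinuousLinearMap.mul_apply]
      _ ≤ c n := hQcontr _
  have hlc : ∀ n, c (n + 1) ^ 2 ≤ c n * c (n + 2) := by
    intro n
    have h1 : c (n + 1) ^ 2 = (inner ℂ ((Q ^ (n+1)) δ) ((Q ^ (n+1)) δ) : ℂ).re := (hre _).symm
    have h2 : (inner ℂ ((Q ^ (n+1)) δ) ((Q ^ (n+1)) δ) : ℂ) = inner ℂ ((Q ^ n) δ) ((Q ^ (n+2)) δ) := by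
      have e1 : (Q ^ (n+1)) δ = Q ((Q ^ n) δ) := by
        simp only [pow_succ']; rw [ContinuousLinearMap.mul_apply]
      have e2 : (Q ^ (n+2)) δ = Q ((Q ^ (n+1)) δ) := by
        simp only [pow_succ']; rw [ContinuousLinearMap.mul_apply]
      conv_lhs => rw [e1]
      rw [hsym _ hQsa, ← e1, ← e2]
    rw [h1, h2]
    calc (inner ℂ ((Q ^ n) δ) ((Q ^ (n+2)) δ) : ℂ).re
        ≤ ‖(inner ℂ ((Q ^ n) δ) ((Q ^ (n+2)) δ) : ℂ)‖ := by
          exact Complex.re_le_norm _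
      _ ≤ ‖(Q ^ n) δ‖ * ‖(Q ^ (n+2)) δ‖ := norm_inner_le_norm _ _
  have hkey : ∀ n, c n ^ (n + 1) ≤ c (n + 1) ^ n := by
    intro n
    induction n with
    | zero => simp [hc0]
    | succ n ih =>
      rcases eq_or_lt_of_le (hcnn (n+1)) with hz | hz
      · have hz2 : c (n + 2) = 0 :=
          le_antisymm (by rw [← hz.symm] at *; exact hz ▸ (hcmono (n+1)).trans hz.symm.le) (hcnn _)
        rw [← hz, hz2]
        simp [zero_pow]
      · have h1 : (c (n+1) ^ 2) ^ (n+1) ≤ (c n * c (n+2)) ^ (n+1) :=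
          pow_le_pow_left₀ (sq_nonneg _) (hlc n) _
        have h2 : (c n * c (n+2)) ^ (n+1) = c n ^ (n+1) * c (n+2) ^ (n+1) := mul_pow _ _ _
        have h3 : c n ^ (n+1) * c (n+2) ^ (n+1) ≤ c (n+1) ^ n * c (n+2) ^ (n+1) :=
          mul_le_mul_of_nonneg_right ih (pow_nonneg (hcnn _) _)
        have h4 : c (n+1) ^ n * c (n+1) ^ (n+2) ≤ c (n+1) ^ n * c (n+2) ^ (n+1) := by
          calc c (n+1) ^ n * c (n+1) ^ (n+2) = (c (n+1) ^ 2) ^ (n+1) := by ring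
            _ ≤ c n ^ (n+1) * c (n+2) ^ (n+1) := by rw [← h2]; exact h1
            _ ≤ c (n+1) ^ n * c (n+2) ^ (n+1) := h3
        exact le_of_mul_le_mul_left h4 (pow_pos hz n)
  -- normalized moments
  set t : ℕ → ℝ := fun n => ((inner ℂ ((P ^ (n+1)) δ) δ : ℂ)).re ^ (((n : ℝ) + 1)⁻¹) with htdef
  have htc : ∀ n, t n = c (n+1) ^ (2 * ((n : ℝ) + 1)⁻¹) := by
    intro n
    rw [htdef]
    simp only
    rw [ha' (n+1), show (2 : ℝ) * ((n : ℝ) + 1)⁻¹ = ((2:ℕ) : ℝ) * ((n : ℝ) + 1)⁻¹ by norm_num,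
      Real.rpow_natCast_mul (hcnn _)]
  have hpow : ∀ n, ‖P ^ n‖ ≤ ‖P‖ ^ n := by
    intro n
    induction n with
    | zero =>
      simpa [pow_zero, ContinuousLinearMap.one_def] using
        ContinuousLinearMap.norm_id_le (E := lp (fun _ : I => ℂ) 2)
    | succ n ih =>
      calc ‖P ^ (n+1)‖ = ‖P ^ n * P‖ := by rw [pow_succ]
        _ ≤ ‖P ^ n‖ * ‖P‖ := norm_mul_le _ _
        _ ≤ ‖P‖ ^ n * ‖P‖ := by nlinarith [norm_nonneg (P ^ n), norm_nonneg P]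
        _ = ‖P‖ ^ (n+1) := (pow_succ _ _).symm
  have hann : ∀ n, (0:ℝ) ≤ ((inner ℂ ((P ^ n) δ) δ : ℂ)).re := by
    intro n; rw [ha']; positivity
  have hub : ∀ n, ((inner ℂ ((P ^ n) δ) δ : ℂ)).re ≤ ‖P‖ ^ n := by
    intro n
    calc ((inner ℂ ((P ^ n) δ) δ : ℂ)).re ≤ ‖(inner ℂ ((P ^ n) δ) δ : ℂ)‖ := by
          exact Complex.re_le_norm _
      _ ≤ ‖(P ^ n) δ‖ * ‖δ‖ := norm_inner_le_norm _ _
      _ ≤ (‖P ^ n‖ * ‖δ‖) * ‖δ‖ := by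
          have := (P ^ n).le_opNorm δ
          nlinarith [norm_nonneg δ]
      _ = ‖P ^ n‖ := by rw [hδ]; ring
      _ ≤ ‖P‖ ^ n := hpow n
  have htub : ∀ n, t n ≤ ‖P‖ := by
    intro n
    rw [htdef]
    simp only
    calc ((inner ℂ ((P ^ (n+1)) δ) δ : ℂ)).re ^ (((n : ℝ) + 1)⁻¹)
        ≤ (‖P‖ ^ (n+1)) ^ (((n : ℝ) + 1)⁻¹) :=
          Real.rpow_le_rpow (hann _) (hub (n+1)) (by positivity)
      _ = ‖P‖ := by
          rw [show ((n:ℝ) + 1)⁻¹ = (((n+1 : ℕ) : ℝ))⁻¹ by push_cast; ring,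
            ← Real.rpow_natCast ‖P‖ (n+1), ← Real.rpow_mul (norm_nonneg P),
            mul_inv_cancel₀ (by positivity), Real.rpow_one]
  have htnn : ∀ n, 0 ≤ t n := fun n => Real.rpow_nonneg (hann _) _
  have htmono : Monotone t := by
    refine monotone_nat_of_le_succ fun n => ?_
    rw [htc n, htc (n+1)]
    have hcast : ((↑(n+1) : ℝ)) + 1 = (n:ℝ) + 2 := by push_cast; ring
    rw [hcast]
    set r : ℝ := 2 * (((n:ℝ)+1)⁻¹ * ((n:ℝ)+2)⁻¹) with hrdef
    have hr0 : 0 ≤ r := by positivity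
    have hk' : c (n+1) ^ (((n+2 : ℕ)) : ℝ) ≤ c (n+2) ^ (((n+1 : ℕ)) : ℝ) := by
      rw [Real.rpow_natCast, Real.rpow_natCast]
      exact hkey (n+1)
    have h1 := Real.rpow_le_rpow (Real.rpow_nonneg (hcnn _) _) hk' hr0
    rw [← Real.rpow_mul (hcnn _), ← Real.rpow_mul (hcnn _)] at h1
    have ea : ((n+2 : ℕ) : ℝ) * r = 2 * ((n:ℝ)+1)⁻¹ := by
      rw [hrdef]; push_cast; field_simp
    have eb : ((n+1 : ℕ) : ℝ) * r = 2 * ((n:ℝ)+2)⁻¹ := by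
      rw [hrdef]; push_cast; field_simp
    rw [ea, eb] at h1
    exact h1
  have hbdd : BddAbove (Set.range t) := ⟨‖P‖, by rintro x ⟨n, rfl⟩; exact htub n⟩
  set L : ℝ := ⨆ n, t n with hLdef
  have htL : ∀ n, t n ≤ L := fun n => le_ciSup hbdd n
  have hL0 : 0 ≤ L := (htnn 0).trans (htL 0)
  have hLle : L ≤ ‖P‖ := ciSup_le htub
  have htend : Tendsto t atTop (nhds L) := tendsto_atTop_ciSup htmono hbdd
  have han : ∀ n, ((inner ℂ ((P ^ n) δ) δ : ℂ)).re ≤ L ^ n := by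
    intro n
    cases n with
    | zero =>
      simp only [pow_zero, ContinuousLinearMap.one_apply]
      rw [hre, hδ]; norm_num
    | succ n =>
      have e1 : (((inner ℂ ((P ^ (n+1)) δ) δ : ℂ)).re ^ (((n:ℝ)+1)⁻¹)) ^ (n+1)
          = ((inner ℂ ((P ^ (n+1)) δ) δ : ℂ)).re := by
        rw [show ((n:ℝ)+1) = ((n+1 : ℕ):ℝ) by push_cast; ring]
        exact Real.rpow_inv_natCast_pow (hann _) (Nat.succ_ne_zero n)
      calc ((inner ℂ ((P ^ (n+1)) δ) δ : ℂ)).re = t n ^ (n+1) := by rw [htdef]; exact e1.symm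
        _ ≤ L ^ (n+1) := pow_le_pow_left₀ (htnn n) (htL n) _
  have hLP : ‖P‖ ≤ L := by
    by_contra hcon
    push_neg at hcon
    have hPpos' : 0 < ‖P‖ := lt_of_le_of_lt hL0 hcon
    set M : ℝ := (L + ‖P‖) / 2 with hMdef
    have hM0 : 0 < M := by rw [hMdef]; linarith
    have hLM : L < M := by rw [hMdef]; linarith
    have hMP : M < ‖P‖ := by rw [hMdef]; linarith
    set g : ℝ → ℝ := fun x => Real.sqrt (max (x - M) 0) with hgdef
    have hgcont : Continuous g :=
      Real.continuous_sqrt.comp ((continuous_id.sub continuous_const).max continuous_const)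
    set G : lp (fun _ : I => ℂ) 2 →L[ℂ] lp (fun _ : I => ℂ) 2 := cfc g P with hGdef
    have hGpos : (0 : lp (fun _ : I => ℂ) 2 →L[ℂ] lp (fun _ : I => ℂ) 2) ≤ G :=
      cfc_nonneg fun x _ => Real.sqrt_nonneg _
    have hGsa : IsSelfAdjoint G := .of_nonneg hGpos
    have hGG : (inner ℂ ((G * G) δ) δ : ℂ).re = ‖G δ‖ ^ 2 := by
      rw [ContinuousLinearMap.mul_apply, hsym _ hGsa, hre]
    have hfs : ∀ n : ℕ, G * G ≤ (M⁻¹ ^ n) • P ^ n := by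
      intro n
      have h1 : G * G = cfc (fun x => max (x - M) 0) P := by
        rw [hGdef, ← cfc_mul g g P]
        apply cfc_congr
        intro x hx
        simp only [hgdef]
        exact Real.mul_self_sqrt (le_max_right _ _)
      have h2 : cfc (fun x => max (x - M) 0) P ≤ cfc (fun x => M⁻¹ ^ n * x ^ n) P := by
        refine cfc_mono (fun x hx => ?_)
          (((continuous_id.sub continuous_const).max continuous_const).continuousOn)
          ((continuous_const.mul (continuous_pow n)).continuousOn)
        obtain ⟨hx0, hx1⟩ := hspec x hx
        rcases le_or_gt x M with h | h
        · rw [max_eq_right (by linarith)]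
          positivity
        · have hMx : (1:ℝ) ≤ x / M := (one_le_div hM0).mpr h.le
          have hpx : (1:ℝ) ≤ (x / M) ^ n := one_le_pow₀ hMx
          calc max (x - M) 0 = x - M := max_eq_left (by linarith)
            _ ≤ 1 := by linarith
            _ ≤ (x / M) ^ n := hpx
            _ = M⁻¹ ^ n * x ^ n := by ring
      have h3 : cfc (fun x => M⁻¹ ^ n * x ^ n) P = (M⁻¹ ^ n) • P ^ n := by
        rw [cfc_const_mul (M⁻¹ ^ n) (fun x : ℝ => x ^ n) P ((continuous_pow n).continuousOn),
          cfc_pow_id P n]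
      rw [h1, ← h3]
      exact h2
    have hφ : ∀ n : ℕ, (inner ℂ ((G * G) δ) δ : ℂ).re ≤ (L / M) ^ n := by
      intro n
      have h5 : (((M⁻¹ ^ n) • P ^ n) - G * G :
          lp (fun _ : I => ℂ) 2 →L[ℂ] lp (fun _ : I => ℂ) 2).IsPositive :=
        (ContinuousLinearMap.le_def _ _).mp (hfs n)
      have h6 := h5.inner_nonneg_left δ
      rw [ContinuousLinearMap.sub_apply, inner_sub_left] at h6
      have h7 : (inner ℂ (((M⁻¹ ^ n • P ^ n :
          lp (fun _ : I => ℂ) 2 →L[ℂ] lp (fun _ : I => ℂ) 2)) δ) δ : ℂ).re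
          = M⁻¹ ^ n * (inner ℂ ((P ^ n) δ) δ : ℂ).re := by
        rw [ContinuousLinearMap.smul_apply, RCLike.real_smul_eq_coe_smul (K := ℂ),
          inner_smul_left]
        show ((starRingEnd ℂ) (Complex.ofReal (M⁻¹ ^ n)) * inner ℂ ((P ^ n) δ) δ).re
          = M⁻¹ ^ n * (inner ℂ ((P ^ n) δ) δ : ℂ).re
        rw [Complex.conj_ofReal, Complex.re_ofReal_mul]
      have h6' : (inner ℂ ((G * G) δ) δ : ℂ).re ≤ (inner ℂ (((M⁻¹ ^ n • P ^ n :
          lp (fun _ : I => ℂ) 2 →L[ℂ] lp (fun _ : I => ℂ) 2)) δ) δ : ℂ).re := by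
        have h6b : (0:ℝ) ≤ (inner ℂ (((M⁻¹ ^ n • P ^ n :
            lp (fun _ : I => ℂ) 2 →L[ℂ] lp (fun _ : I => ℂ) 2)) δ) δ : ℂ).re
            - (inner ℂ ((G * G) δ) δ : ℂ).re := by
            have := (Complex.nonneg_iff.mp h6).1; rwa [Complex.sub_re] at this
        linarith
      have hMn : (0:ℝ) ≤ M⁻¹ ^ n := by positivity
      calc (inner ℂ ((G * G) δ) δ : ℂ).re
          ≤ M⁻¹ ^ n * (inner ℂ ((P ^ n) δ) δ : ℂ).re := by rw [← h7]; exact h6'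
        _ ≤ M⁻¹ ^ n * L ^ n := mul_le_mul_of_nonneg_left (han n) hMn
        _ = (L / M) ^ n := by ring
    have hLM1 : L / M < 1 := (div_lt_one hM0).mpr hLM
    have hLM0 : (0:ℝ) ≤ L / M := by positivity
    have htend0 : Tendsto (fun n : ℕ => (L/M) ^ n) atTop (nhds 0) :=
      tendsto_pow_atTop_nhds_zero_of_lt_one hLM0 hLM1
    have hφ0 : (inner ℂ ((G * G) δ) δ : ℂ).re ≤ 0 := ge_of_tendsto' htend0 hφ
    have hGδ : G δ = 0 := by
      have hn2 : ‖G δ‖ ^ 2 = 0 := le_antisymm (hGG ▸ hφ0) (by positivity)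
      simpa using (pow_eq_zero_iff (two_ne_zero)).mp hn2
    have hGzero : ∀ x, G x = 0 := by
      have hcl : IsClosed {x : lp (fun _ : I => ℂ) 2 | G x = 0} :=
        isClosed_eq G.continuous continuous_const
      have hsub : {x : lp (fun _ : I => ℂ) 2 | ∃ S, Commute S P ∧ S δ = x} ⊆
          {x : lp (fun _ : I => ℂ) 2 | G x = 0} := by
        rintro x ⟨S, hS, rfl⟩
        have hc : Commute S G := Commute.cfc_real' hPsa hS g
        show G (S δ) = 0
        have hGS : G (S δ) = S (G δ) := by
          rw [← ContinuousLinearMap.mul_apply, ← ContinuousLinearMap.mul_apply, ← hc.eq]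
        rw [hGS, hGδ, map_zero]
      intro x
      have huniv : (Set.univ : Set (lp (fun _ : I => ℂ) 2)) ⊆ {x | G x = 0} := by
        rw [← hcyc.closure_eq]
        exact hcl.closure_subset_iff.mpr hsub
      exact huniv (Set.mem_univ x)
    have hGop : G = 0 := ContinuousLinearMap.ext fun x => hGzero x
    have hPmem : ‖P‖ ∈ spectrum ℝ P := CStarAlgebra.norm_mem_spectrum_of_nonneg hPpos
    have hmap : spectrum ℝ G = g '' spectrum ℝ P :=
      cfc_map_spectrum g P hPsa hgcont.continuousOn
    have hmem0 : g ‖P‖ ∈ spectrum ℝ G := hmap ▸ Set.mem_image_of_mem g hPmem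
    rw [hGop, spectrum.zero_eq] at hmem0
    have hgP : g ‖P‖ = 0 := hmem0
    rw [hgdef] at hgP
    simp only at hgP
    rw [max_eq_left (by linarith)] at hgP
    have hfin : ‖P‖ - M ≤ 0 := Real.sqrt_eq_zero'.mp hgP
    linarith
  have hLeq : L = ‖T‖ ^ 2 := by rw [← hPnorm]; exact le_antisymm hLle hLP
  rw [← hLeq]
  refine (tendsto_add_atTop_iff_nat 1).mp (htend.congr fun n => ?_)
  rw [htdef]
  simp only [Nat.cast_add, Nat.cast_one]
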